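/- For all n ≥ 1, the total number of 1-ascents in all dispersed Dyck paths of length n+2 satisfies A(n+2) = dD(n) + D(n) + R(n), where dD(n) is the number of DDPs of length n, D(n) the total number of down steps, and R(n) the total number of right steps in all DDPs of length n. -/

import Mathlib

inductive DStep | up | down | right
deriving DecidableEq, Repr

instance : Fintype DStep :=
  ⟨{DStep.up, DStep.down, DStep.right}, fun x => by cases x <;> simp⟩

/-- Run a dispersed Dyck path from height `h`; `none` if an illegal step occurs,
otherwise the final height. Down steps require positive height; right steps require height 0. -/
def DStep.run : ℕ → List DStep → Option ℕ
  | h, [] => some h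
  | h, .up :: l => DStep.run (h + 1) l
  | h + 1, .down :: l => DStep.run h l
  | 0, .down :: _ => none
  | 0, .right :: l => DStep.run 0 l
  | _ + 1, .right :: _ => none

/-- A dispersed Dyck path: starts and ends at height 0, all steps legal. -/
def IsDDP (l : List DStep) : Prop := DStep.run 0 l = some 0

instance : DecidablePred IsDDP := fun l => by unfold IsDDP; infer_instance

/-- The finset of all dispersed Dyck paths of length `n`. -/
def DDPs (n : ℕ) : Finset (List.Vector DStep n) :=
  Finset.univ.filter (fun v => IsDDP v.toList)

/-- Number of dispersed Dyck paths of length `n`. -/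
def dD (n : ℕ) : ℕ := (DDPs n).card

/-- Total number of up steps over all DDPs of length `n`. -/
def U (n : ℕ) : ℕ := ∑ v ∈ DDPs n, v.toList.count DStep.up

/-- Total number of down steps over all DDPs of length `n`. -/
def D (n : ℕ) : ℕ := ∑ v ∈ DDPs n, v.toList.count DStep.down

/-- Total number of right steps over all DDPs of length `n`. -/
def R (n : ℕ) : ℕ := ∑ v ∈ DDPs n, v.toList.count DStep.right

/-- `i` is the position of a 1-ascent in `l`: an up step with no adjacent up step. -/
def IsOneAscentAt (l : List DStep) (i : ℕ) : Prop :=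
  l[i]? = some .up ∧ l[i + 1]? ≠ some .up ∧ (i = 0 ∨ l[i - 1]? ≠ some .up)

instance (l : List DStep) : DecidablePred (IsOneAscentAt l) := fun i => by
  unfold IsOneAscentAt; infer_instance

/-- Number of 1-ascents in `l`. -/
def oneAsc (l : List DStep) : ℕ :=
  ((Finset.range l.length).filter (IsOneAscentAt l)).card

/-- Total number of 1-ascents over all DDPs of length `n`. -/
def A (n : ℕ) : ℕ := ∑ v ∈ DDPs n, oneAsc v.toList

/-- Signed final height of a plain path (ignoring any right steps). -/
def psum : List DStep → ℤ
  | [] => 0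
  | .up :: l => 1 + psum l
  | .down :: l => -1 + psum l
  | .right :: l => psum l



lemma run_append (l1 l2 : List DStep) (h : ℕ) :
    DStep.run h (l1 ++ l2) = (DStep.run h l1).bind (fun h' => DStep.run h' l2) := by
  induction l1 generalizing h with
  | nil => simp [DStep.run]
  | cons a t ih => cases a <;> cases h <;> simp [DStep.run, ih]

lemma run_ud (h : ℕ) : DStep.run h [.up, .down] = some h := by
  simp [DStep.run]

lemma isDDP_insert (l1 l2 : List DStep) :
    IsDDP (l1 ++ [DStep.up, DStep.down] ++ l2) ↔ IsDDP (l1 ++ l2) := by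
  unfold IsDDP
  rw [List.append_assoc, run_append, run_append]
  have : ∀ h', DStep.run h' ([DStep.up, DStep.down] ++ l2) = DStep.run h' l2 := by
    intro h'; rw [run_append, run_ud]; rfl
  simp only [this]

lemma next_down (l : List DStep) (i : ℕ) (hl : IsDDP l)
    (hi : l[i]? = some .up) (hnu : l[i + 1]? ≠ some .up) :
    l[i + 1]? = some .down := by
  have hilt : i < l.length := by
    by_contra h
    rw [List.getElem?_eq_none (le_of_not_gt h)] at hi
    exact Option.some_ne_none _ hi.symm
  have hdec : l.drop i = DStep.up :: l.drop (i + 1) := by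
    rw [List.drop_eq_getElem_cons hilt]
    congr 1
    have := List.getElem?_eq_getElem hilt
    rw [hi] at this
    exact (Option.some.inj this).symm
  have hsplit : l = l.take i ++ (DStep.up :: l.drop (i + 1)) := by
    rw [← hdec, List.take_append_drop]
  have hrun : DStep.run 0 l = some 0 := hl
  rw [hsplit, run_append] at hrun
  obtain ⟨h, hh1, hh2⟩ : ∃ h, DStep.run 0 (l.take i) = some h ∧
      DStep.run h (DStep.up :: l.drop (i+1)) = some 0 := by
    cases hc : DStep.run 0 (l.take i) with
    | none => rw [hc] at hrun; exact absurd hrun (by simp)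
    | some h => rw [hc] at hrun; exact ⟨h, rfl, hrun⟩
  have hh2' : DStep.run (h + 1) (l.drop (i + 1)) = some 0 := by rw [show DStep.run h (DStep.up :: l.drop (i+1)) = DStep.run (h+1) (l.drop (i+1)) from by simp [DStep.run]] at hh2; exact hh2
  have hget : l[i + 1]? = (l.drop (i + 1))[0]? := by
    simp [List.getElem?_drop]
  cases hd : l.drop (i + 1) with
  | nil => rw [hd] at hh2'; simp [DStep.run] at hh2'
  | cons s t =>
    rw [hd] at hh2' hget
    cases s with
    | up => exact absurd (by simpa using hget) hnu
    | down => simpa using hget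
    | right => simp [DStep.run] at hh2'

lemma count_idx (c : DStep) (l : List DStep) :
    ((Finset.range l.length).filter (fun k => l[k]? = some c)).card = l.count c := by
  induction l with
  | nil => simp
  | cons a t ih =>
    rw [Finset.card_filter] at ih ⊢
    rw [List.length_cons, Finset.sum_range_succ']
    simp only [List.getElem?_cons_succ, List.getElem?_cons_zero, List.count_cons]
    rw [ih]
    by_cases hac : a = c <;> simp [hac, Option.some.injEq, add_comm]

lemma marker_card (w : List DStep) :
    ((Finset.range (w.length + 1)).filter
      (fun j => j = 0 ∨ w[j - 1]? ≠ some DStep.up)).card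
      = 1 + w.count DStep.down + w.count DStep.right := by
  rw [Finset.card_filter, Finset.sum_range_succ']
  have hstep : ∀ i ∈ Finset.range w.length,
      (if (i + 1 = 0 ∨ w[i + 1 - 1]? ≠ some DStep.up) then 1 else 0)
      = (if w[i]? = some DStep.down then 1 else 0)
        + (if w[i]? = some DStep.right then 1 else 0) := by
    intro i hi
    have hi' : i < w.length := Finset.mem_range.1 hi
    obtain ⟨c, hc⟩ : ∃ c, w[i]? = some c := ⟨_, List.getElem?_eq_getElem hi'⟩
    simp only [Nat.add_sub_cancel, hc]
    cases c <;> simp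
  rw [Finset.sum_congr rfl hstep, Finset.sum_add_distrib]
  rw [← Finset.card_filter, ← Finset.card_filter, count_idx, count_idx]
  simp [add_comm, add_assoc, add_left_comm]

lemma decomp (l : List DStep) (i : ℕ) (h1 : l[i]? = some .up) (h2 : l[i+1]? = some .down) :
    l = l.take i ++ [DStep.up, DStep.down] ++ l.drop (i+2) := by
  obtain ⟨hi, hv1⟩ := List.getElem?_eq_some_iff.1 h1
  obtain ⟨hi2, hv2⟩ := List.getElem?_eq_some_iff.1 h2
  conv_lhs => rw [← List.take_append_drop i l]
  rw [List.append_assoc]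
  congr 1
  rw [List.drop_eq_getElem_cons hi, List.drop_eq_getElem_cons hi2]
  rw [hv1, hv2]
  rfl

def pad (n : ℕ) (l : List DStep) : List.Vector DStep n :=
  ⟨(l ++ List.replicate n DStep.up).take n, by
    simp [List.length_take, Nat.min_eq_left (Nat.le_add_left n _)]⟩

lemma pad_toList {n : ℕ} {l : List DStep} (h : l.length = n) : (pad n l).toList = l :=
  List.take_left' h

lemma vec_ext {n : ℕ} {v w : List.Vector DStep n} (h : v.toList = w.toList) : v = w :=
  Subtype.ext h

lemma fwd_facts {n i : ℕ} {l : List DStep} (hlen : l.length = n + 2) (hvd : IsDDP l)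
    (hup : l[i]? = some .up) (hnu : l[i + 1]? ≠ some .up) :
    i + 1 < n + 2 ∧ l = l.take i ++ [DStep.up, DStep.down] ++ l.drop (i+2)
      ∧ (l.take i ++ l.drop (i+2)).length = n ∧ (l.take i).length = i := by
  have hdn := next_down l i hvd hup hnu
  have hi2 : i + 1 < n + 2 := by
    have := (List.getElem?_eq_some_iff.1 hdn).1; omega
  have htl : (l.take i).length = i := by
    rw [List.length_take]; exact Nat.min_eq_left (by omega)
  refine ⟨hi2, decomp l i hup hdn, ?_, htl⟩
  rw [List.length_append, htl, List.length_drop, hlen]; omega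

/-- For `n ≥ 1`, the total number of 1-ascents in all DDPs of length `n + 2` equals
`dD(n) + D(n) + R(n)`. -/
theorem oneAscent_formula (n : ℕ) (hn : 1 ≤ n) : A (n + 2) = dD n + D n + R n := by
  classical
  have hL : A (n + 2) = ((DDPs (n+2)).sigma
      (fun v => (Finset.range (n+2)).filter (IsOneAscentAt v.toList))).card := by
    rw [Finset.card_sigma]
    unfold A oneAsc
    refine Finset.sum_congr rfl (fun v _ => ?_)
    rw [List.Vector.toList_length]
  have hR : dD n + D n + R n = ((DDPs n).sigma
      (fun w => (Finset.range (n+1)).filter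
        (fun j => j = 0 ∨ w.toList[j-1]? ≠ some DStep.up))).card := by
    rw [Finset.card_sigma]
    unfold dD D R
    rw [Finset.card_eq_sum_ones, ← Finset.sum_add_distrib, ← Finset.sum_add_distrib]
    refine Finset.sum_congr rfl (fun w _ => ?_)
    have h := marker_card w.toList
    rw [List.Vector.toList_length] at h
    omega
  rw [hL, hR]
  apply Finset.card_nbij'
    (i := fun a => ⟨pad n (a.1.toList.take a.2 ++ a.1.toList.drop (a.2+2)), a.2⟩)
    (j := fun b => ⟨pad (n+2) (b.1.toList.take b.2 ++ [DStep.up, DStep.down]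
      ++ b.1.toList.drop b.2), b.2⟩)
  · rintro ⟨v, i⟩ ha
    dsimp only at ha ⊢
    obtain ⟨hv, hi⟩ := Finset.mem_sigma.1 ha
    rw [Finset.mem_filter, Finset.mem_range] at hi
    obtain ⟨hilt, hup, hnu, hprev⟩ := hi
    have hilt : i < n + 2 := hilt
    have hup : v.toList[i]? = some DStep.up := hup
    have hnu : v.toList[i + 1]? ≠ some DStep.up := hnu
    have hprev : i = 0 ∨ v.toList[i - 1]? ≠ some DStep.up := hprev
    have hvd : IsDDP v.toList := by simpa [DDPs] using hv
    have hlen : v.toList.length = n + 2 := List.Vector.toList_length v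
    obtain ⟨hi2, hd, hwlen, htl⟩ := fwd_facts hlen hvd hup hnu
    have hwt : (pad n (v.toList.take i ++ v.toList.drop (i+2))).toList
        = v.toList.take i ++ v.toList.drop (i+2) := pad_toList hwlen
    have hm1 : pad n (v.toList.take i ++ v.toList.drop (i+2)) ∈ DDPs n := by
      simp only [DDPs, Finset.mem_filter, Finset.mem_univ, true_and]
      rw [hwt]
      exact (isDDP_insert _ _).1 (by rw [← hd]; exact hvd)
    have hm2 : i ∈ (Finset.range (n+1)).filter
        (fun j => j = 0 ∨ (pad n (v.toList.take i ++ v.toList.drop (i+2))).toList[j-1]?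
          ≠ some DStep.up) := by
      rw [Finset.mem_filter, Finset.mem_range]
      refine ⟨by omega, ?_⟩
      rcases Nat.eq_zero_or_pos i with h0 | hpos
      · exact Or.inl h0
      · refine Or.inr ?_
        rw [hwt]
        have h1 : i - 1 < (v.toList.take i).length := by rw [htl]; omega
        rw [List.getElem?_append_left h1, List.getElem?_take_of_lt (by omega : i - 1 < i)]
        rcases hprev with h | h
        · omega
        · exact h
    exact Finset.mem_sigma.2 ⟨hm1, hm2⟩
  · rintro ⟨w, j⟩ hb
    dsimp only at hb ⊢
    obtain ⟨hw, hj⟩ := Finset.mem_sigma.1 hb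
    rw [Finset.mem_filter, Finset.mem_range] at hj
    obtain ⟨hjlt, hcond⟩ := hj
    have hjlt : j < n + 1 := hjlt
    have hcond : j = 0 ∨ w.toList[j - 1]? ≠ some DStep.up := hcond
    have hwd : IsDDP w.toList := by simpa [DDPs] using hw
    have hmlen : w.toList.length = n := List.Vector.toList_length w
    have htlen : (w.toList.take j).length = j := by
      rw [List.length_take]; exact Nat.min_eq_left (by omega)
    have hvlen : (w.toList.take j ++ [DStep.up, DStep.down] ++ w.toList.drop j).length
        = n + 2 := by
      rw [List.length_append, List.length_append, htlen, List.length_drop, hmlen]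
      simp only [List.length_cons, List.length_nil]
      omega
    have hvt := pad_toList hvlen
    have hm1 : pad (n+2) (w.toList.take j ++ [DStep.up, DStep.down] ++ w.toList.drop j)
        ∈ DDPs (n+2) := by
      simp only [DDPs, Finset.mem_filter, Finset.mem_univ, true_and]
      rw [hvt]
      exact (isDDP_insert _ _).2 (by rw [List.take_append_drop]; exact hwd)
    have hm2 : j ∈ (Finset.range (n+2)).filter (IsOneAscentAt
        (pad (n+2) (w.toList.take j ++ [DStep.up, DStep.down] ++ w.toList.drop j)).toList) := by
      rw [Finset.mem_filter, Finset.mem_range]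
      refine ⟨by omega, ?_, ?_, ?_⟩
      · rw [hvt, List.append_assoc, List.getElem?_append_right htlen.le, htlen]
        simp
      · rw [hvt, List.append_assoc,
          List.getElem?_append_right (by rw [htlen]; omega : (w.toList.take j).length ≤ j + 1),
          htlen]
        simp
      · rcases hcond with h0 | hne
        · exact Or.inl h0
        · rcases Nat.eq_zero_or_pos j with h0 | hpos
          · exact Or.inl h0
          · refine Or.inr ?_
            rw [hvt, List.append_assoc,
              List.getElem?_append_left (by rw [htlen]; omega : j - 1 < (w.toList.take j).length),
              List.getElem?_take_of_lt (by omega : j - 1 < j)]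
            exact hne
    exact Finset.mem_sigma.2 ⟨hm1, hm2⟩
  · rintro ⟨v, i⟩ ha
    dsimp only at ha ⊢
    obtain ⟨hv, hi⟩ := Finset.mem_sigma.1 ha
    rw [Finset.mem_filter, Finset.mem_range] at hi
    obtain ⟨hilt, hup, hnu, hprev⟩ := hi
    have hilt : i < n + 2 := hilt
    have hup : v.toList[i]? = some DStep.up := hup
    have hnu : v.toList[i + 1]? ≠ some DStep.up := hnu
    have hprev : i = 0 ∨ v.toList[i - 1]? ≠ some DStep.up := hprev
    have hvd : IsDDP v.toList := by simpa [DDPs] using hv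
    have hlen : v.toList.length = n + 2 := List.Vector.toList_length v
    obtain ⟨hi2, hd, hwlen, htl⟩ := fwd_facts hlen hvd hup hnu
    have hwt : (pad n (v.toList.take i ++ v.toList.drop (i+2))).toList
        = v.toList.take i ++ v.toList.drop (i+2) := pad_toList hwlen
    show (⟨pad (n+2) _, i⟩ : Σ _ : List.Vector DStep (n+2), ℕ) = ⟨v, i⟩
    rw [hwt, List.take_left' htl, List.drop_left' htl]
    congr 1
    apply vec_ext
    rw [pad_toList (by rw [← hd, hlen] :
      (v.toList.take i ++ [DStep.up, DStep.down] ++ v.toList.drop (i+2)).length = n + 2)]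
    exact hd.symm
  · rintro ⟨w, j⟩ hb
    dsimp only at hb ⊢
    obtain ⟨hw, hj⟩ := Finset.mem_sigma.1 hb
    rw [Finset.mem_filter, Finset.mem_range] at hj
    obtain ⟨hjlt, hcond⟩ := hj
    have hjlt : j < n + 1 := hjlt
    have hcond : j = 0 ∨ w.toList[j - 1]? ≠ some DStep.up := hcond
    have hmlen : w.toList.length = n := List.Vector.toList_length w
    have htlen : (w.toList.take j).length = j := by
      rw [List.length_take]; exact Nat.min_eq_left (by omega)
    have hvlen : (w.toList.take j ++ [DStep.up, DStep.down] ++ w.toList.drop j).length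
        = n + 2 := by
      rw [List.length_append, List.length_append, htlen, List.length_drop, hmlen]
      simp only [List.length_cons, List.length_nil]
      omega
    have hvt := pad_toList hvlen
    show (⟨pad n _, j⟩ : Σ _ : List.Vector DStep n, ℕ) = ⟨w, j⟩
    rw [hvt]
    have h1 : (w.toList.take j ++ [DStep.up, DStep.down] ++ w.toList.drop j).take j
        = w.toList.take j := by
      rw [List.append_assoc]
      exact List.take_left' htlen
    have h2 : (w.toList.take j ++ [DStep.up, DStep.down] ++ w.toList.drop j).drop (j + 2)
        = w.toList.drop j :=
      List.drop_left' (by rw [List.length_append, htlen]; rfl)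
    rw [h1, h2, List.take_append_drop]
    congr 1
    apply vec_ext
    rw [pad_toList hmlen]
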